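/- In a free group, if xⁿ = yⁿ for some nonzero integer n, then x = y. -/

import Mathlib

namespace FreeGroupRoots

open FreeGroup List

variable {α : Type*} [DecidableEq α]
set_option linter.unusedSectionVars false

/-- The "no cancellation" relation between adjacent letters. -/
def R : (α × Bool) → (α × Bool) → Prop := fun a b => ¬(a.1 = b.1 ∧ a.2 = !b.2)

lemma invRev_cons (a : α × Bool) (l : List (α × Bool)) :
    invRev (a :: l) = invRev l ++ [(a.1, !a.2)] := by
  simp [invRev]

lemma invRev_append' (l₁ l₂ : List (α × Bool)) :
    invRev (l₁ ++ l₂) = invRev l₂ ++ invRev l₁ := by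
  simp [invRev]

lemma reduced_iff_chain (L : List (α × Bool)) :
    FreeGroup.reduce L = L ↔ List.Chain' R L := by
  induction L with
  | nil => simp [List.Chain']
  | cons x L ih =>
    rw [FreeGroup.reduce.cons]
    rcases hL : FreeGroup.reduce L with _ | ⟨hd, tl⟩
    · simp only []
      constructor
      · intro h
        have hL0 : L = [] := by
          injection h with _ h2
          exact h2.symm
        subst hL0; simp [List.Chain', List.isChain_singleton]
      · intro h
        have : FreeGroup.reduce L = L := ih.mpr h.tail
        rw [hL] at this
        rw [← this]
    · simp only []
      constructor
      · intro h
        by_cases hc : x.1 = hd.1 ∧ x.2 = !hd.2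
        · rw [if_pos hc] at h
          exfalso
          have hred : FreeGroup.Red L (FreeGroup.reduce L) := FreeGroup.reduce.red
          have hlen : (FreeGroup.reduce L).length ≤ L.length := FreeGroup.Red.length_le hred
          rw [hL] at hlen
          have h1 : tl.length = L.length + 1 := by rw [h]; simp
          simp only [List.length_cons] at hlen
          omega
        · rw [if_neg hc] at h
          have hLtl : L = hd :: tl := by
            injection h with _ h2
            exact h2.symm
          have hredL : FreeGroup.reduce L = L := by rw [hL, hLtl]
          have hcL : List.Chain' R L := ih.mp hredL
          rw [hLtl]
          exact List.isChain_cons_cons.mpr ⟨hc, hLtl ▸ hcL⟩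
      · intro h
        have hredL : FreeGroup.reduce L = L := ih.mpr h.tail
        rw [hL] at hredL
        subst hredL
        have hRx : R x hd := List.isChain_cons_cons.mp h |>.1
        rw [if_neg hRx]

lemma flatten_replicate_nil (m : ℕ) :
    (List.replicate m ([] : List (α × Bool))).flatten = [] := by
  induction m with
  | zero => rfl
  | succ m ih => rw [List.replicate_succ, List.flatten_cons, ih]; rfl

lemma length_flatten_replicate (m : ℕ) (w : List (α × Bool)) :
    (List.replicate m w).flatten.length = m * w.length := by
  induction m with
  | zero => simp
  | succ m ih =>
    rw [List.replicate_succ, List.flatten_cons, List.length_append, ih]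
    ring

lemma head?_flatten_replicate {m : ℕ} (hm : m ≠ 0) (w : List (α × Bool)) (hw : w ≠ []) :
    (List.replicate m w).flatten.head? = w.head? := by
  obtain ⟨k, rfl⟩ := Nat.exists_eq_succ_of_ne_zero hm
  rw [List.replicate_succ, List.flatten_cons]
  cases w with
  | nil => exact absurd rfl hw
  | cons a l => simp

lemma getLast?_flatten_replicate {m : ℕ} (hm : m ≠ 0) (w : List (α × Bool)) (hw : w ≠ []) :
    (List.replicate m w).flatten.getLast? = w.getLast? := by
  obtain ⟨k, rfl⟩ := Nat.exists_eq_succ_of_ne_zero hm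
  rw [List.replicate_succ', List.flatten_append]
  simp only [List.flatten_cons, List.flatten_nil, List.append_nil]
  rw [List.getLast?_append_of_ne_nil _ hw]

lemma chain'_flatten_replicate {w : List (α × Bool)} (h : List.Chain' R (w ++ w)) (m : ℕ) :
    List.Chain' R (List.replicate m w).flatten := by
  induction m with
  | zero => simp [List.Chain']
  | succ m ih =>
    rcases eq_or_ne w [] with rfl | hw
    · rw [flatten_replicate_nil]; simp [List.Chain']
    rw [List.replicate_succ, List.flatten_cons]
    refine List.isChain_append.mpr ⟨h.left_of_append, ih, ?_⟩
    intro a ha b hb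
    rcases Nat.eq_zero_or_pos m with rfl | hm
    · simp at hb
    · rw [head?_flatten_replicate (Nat.pos_iff_ne_zero.mp hm) w hw] at hb
      exact (List.isChain_append.mp h).2.2 a ha b hb

lemma cyclic_decomp : ∀ (n : ℕ) (L : List (α × Bool)), L.length ≤ n → List.Chain' R L →
    ∃ u w, L = u ++ w ++ invRev u ∧ List.Chain' R (w ++ w) := by
  intro n
  induction n with
  | zero =>
    intro L hlen _
    have : L = [] := List.length_eq_zero_iff.mp (Nat.le_zero.mp hlen)
    exact ⟨[], [], by simp [this, invRev], by simp [List.Chain']⟩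
  | succ n ih =>
    intro L hlen hL
    cases hLc : L with
    | nil => exact ⟨[], [], by simp [invRev], by simp [List.Chain']⟩
    | cons b T =>
      subst hLc
      set lb := (b :: T).getLast (List.cons_ne_nil b T) with hlb
      by_cases hc : lb.1 = b.1 ∧ lb.2 = !b.2
      · -- cancellation at the ends; peel off
        have hT : T ≠ [] := by
          rintro rfl
          simp only [List.getLast_singleton] at hlb
          rw [hlb] at hc
          simp at hc
        have hlbT : T.getLast hT = lb := by
          rw [hlb, List.getLast_cons hT]
        have hTd : T = T.dropLast ++ [lb] := by
          conv_lhs => rw [← List.dropLast_append_getLast hT]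
          rw [hlbT]
        set M := T.dropLast with hM
        have hLM : b :: T = (b :: M) ++ [lb] := by rw [hTd]; rfl
        have hMchain : List.Chain' R M := by
          refine hL.infix ?_
          exact ⟨[b], [lb], by rw [hLM]; simp⟩
        have hMlen : M.length ≤ n := by
          have h1 := congrArg List.length hTd
          simp only [List.length_append, List.length_cons, List.length_singleton] at h1 hlen
          omega
        obtain ⟨u', w, hMeq, hw⟩ := ih M hMlen hMchain
        refine ⟨b :: u', w, ?_, hw⟩
        have hinv : invRev (b :: u') = invRev u' ++ [(b.1, !b.2)] := invRev_cons b u'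
        have hlb2 : lb = (b.1, !b.2) := Prod.ext hc.1 hc.2
        rw [hLM, hMeq, hinv, hlb2]
        simp [List.append_assoc]
      · -- already cyclically reduced
        refine ⟨[], b :: T, by simp [invRev], ?_⟩
        refine List.isChain_append.mpr ⟨hL, hL, ?_⟩
        intro x hx y hy
        rw [List.getLast?_eq_getLast (List.cons_ne_nil b T)] at hx
        simp only [Option.mem_def, Option.some.injEq] at hx hy
        simp only [List.head?_cons, Option.some.injEq] at hy
        rw [← hx, ← hy] at *
        exact fun hh => hc ⟨hh.1, hh.2⟩

lemma pow_toWord (x : FreeGroup α) (m : ℕ) (hm : m ≠ 0) :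
    ∃ u w, x.toWord = u ++ w ++ invRev u ∧ List.Chain' R (w ++ w) ∧
      (x ^ m).toWord = u ++ (List.replicate m w).flatten ++ invRev u := by
  have hred : FreeGroup.reduce x.toWord = x.toWord := FreeGroup.reduce_toWord x
  have hchain : List.Chain' R x.toWord := (reduced_iff_chain _).mp hred
  obtain ⟨u, w, heq, hw⟩ := cyclic_decomp x.toWord.length x.toWord le_rfl hchain
  refine ⟨u, w, heq, hw, ?_⟩
  set W := (List.replicate m w).flatten with hW
  -- x ^ m = mk (u ++ W ++ invRev u)
  have hx : x = FreeGroup.mk u * FreeGroup.mk w * (FreeGroup.mk u)⁻¹ := by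
    rw [FreeGroup.inv_mk, FreeGroup.mul_mk, FreeGroup.mul_mk, ← heq, FreeGroup.mk_toWord]
  have hxm : x ^ m = FreeGroup.mk (u ++ W ++ invRev u) := by
    rw [hx, conj_pow, FreeGroup.pow_mk, ← hW, FreeGroup.inv_mk, FreeGroup.mul_mk,
      FreeGroup.mul_mk]
  -- the word u ++ W ++ invRev u is reduced
  have hchain2 : List.Chain' R (u ++ W ++ invRev u) := by
    rcases eq_or_ne w [] with rfl | hwne
    · rw [hW, flatten_replicate_nil, ← heq]
      exact hchain
    · have hWne : W ≠ [] := by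
        intro h0
        have hl0 : W.length = 0 := by rw [h0]; rfl
        rw [hW, length_flatten_replicate] at hl0
        rcases Nat.mul_eq_zero.mp hl0 with h | h
        · exact hm h
        · exact hwne (List.eq_nil_of_length_eq_zero h)
      rw [List.append_assoc]
      rw [heq, List.append_assoc] at hchain
      obtain ⟨hu, hrest, j1⟩ := List.isChain_append.mp hchain
      obtain ⟨hwc, hiu, j2⟩ := List.isChain_append.mp hrest
      refine List.isChain_append.mpr ⟨hu, ?_, ?_⟩
      · refine List.isChain_append.mpr ⟨chain'_flatten_replicate hw m, hiu, ?_⟩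
        intro a ha b hb
        rw [hW, getLast?_flatten_replicate hm w hwne] at ha
        exact j2 a ha b hb
      · intro a ha b hb
        refine j1 a ha b ?_
        have e1 : (W ++ invRev u).head? = W.head? := by
          rw [List.head?_append]
          rcases List.exists_cons_of_ne_nil hWne with ⟨c, W', hWc⟩
          rw [hWc]; rfl
        have e2 : W.head? = w.head? := head?_flatten_replicate hm w hwne
        have e3 : (w ++ invRev u).head? = w.head? := by
          rw [List.head?_append]
          rcases List.exists_cons_of_ne_nil hwne with ⟨d, w', hwd⟩
          rw [hwd]; rfl
        rw [e3, ← e2, ← e1]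
        exact hb
  rw [hxm, FreeGroup.toWord_mk, (reduced_iff_chain _).mpr hchain2]

lemma key {u v w z : List (α × Bool)} {m : ℕ} (hm : m ≠ 0)
    (hw : List.Chain' R (w ++ w))
    (huv : u.length ≤ v.length)
    (he : u ++ (List.replicate m w).flatten ++ invRev u
        = v ++ (List.replicate m z).flatten ++ invRev v) :
    u = v ∧ w = z := by
  set W := (List.replicate m w).flatten with hWdef
  set Z := (List.replicate m z).flatten with hZdef
  -- u is a prefix of v
  have hpre : v = u ++ v.drop u.length := by
    have h1 : (u ++ W ++ invRev u).take u.length = u := by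
      rw [List.append_assoc, List.take_left]
    have h2 : (v ++ Z ++ invRev v).take u.length = v.take u.length := by
      rw [List.append_assoc, List.take_append_of_le_length huv]
    have h3 : u = v.take u.length := by
      conv_lhs => rw [← h1]
      rw [he, h2]
    have h4 := List.take_append_drop u.length v
    rw [← h3] at h4
    exact h4.symm
  obtain ⟨p, hpre⟩ : ∃ p, v = u ++ p := ⟨v.drop u.length, hpre⟩
  have hWeq : W = p ++ Z ++ invRev p := by
    have he2 : u ++ (W ++ invRev u) = u ++ (p ++ Z ++ invRev p ++ invRev u) := by
      rw [← List.append_assoc, he, hpre, invRev_append']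
      simp [List.append_assoc]
    have he3 := List.append_cancel_left he2
    have he4 : W ++ invRev u = (p ++ Z ++ invRev p) ++ invRev u := by
      exact he3
    exact List.append_cancel_right he4
  have hp : p = [] := by
    by_contra hpne
    rcases List.exists_cons_of_ne_nil hpne with ⟨a, p', rfl⟩
    have hWne : W ≠ [] := by
      intro h0
      rw [h0] at hWeq
      have := congrArg List.length hWeq
      simp at this
    -- W ++ W is chain'-reduced
    have hWW : List.Chain' R (W ++ W) := by
      have : W ++ W = (List.replicate (m + m) w).flatten := by
        rw [hWdef, List.replicate_add, List.flatten_append]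
      rw [this]
      exact chain'_flatten_replicate hw (m + m)
    have hhead : W.head? = some a := by
      rw [hWeq]
      simp
    have hlast : W.getLast? = some (a.1, !a.2) := by
      rw [hWeq, List.getLast?_append_of_ne_nil]
      · rw [invRev_cons, List.getLast?_concat]
      · rw [invRev_cons]
        simp
    have := (List.isChain_append.mp hWW).2.2 (a.1, !a.2) (by rw [hlast]; rfl) a
      (by rw [hhead]; rfl)
    exact this ⟨rfl, rfl⟩
  have huv2 : u = v := by rw [hpre, hp, List.append_nil]
  refine ⟨huv2, ?_⟩
  have hWZ : W = Z := by rw [hWeq, hp]; simp [invRev]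
  have hlen : w.length = z.length := by
    have := congrArg List.length hWZ
    rw [hWdef, hZdef, length_flatten_replicate, length_flatten_replicate] at this
    exact Nat.eq_of_mul_eq_mul_left (Nat.pos_of_ne_zero hm) this
  obtain ⟨k, rfl⟩ := Nat.exists_eq_succ_of_ne_zero hm
  have hwW : w = W.take w.length := by
    rw [hWdef, List.replicate_succ, List.flatten_cons, List.take_left]
  have hzZ : z = Z.take z.length := by
    rw [hZdef, List.replicate_succ, List.flatten_cons, List.take_left]
  rw [hwW, hzZ, hWZ, hlen]

lemma main_nat (x y : FreeGroup α) (m : ℕ) (hm : m ≠ 0) (h : x ^ m = y ^ m) : x = y := by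
  obtain ⟨u, w, hx, hw, hxm⟩ := pow_toWord x m hm
  obtain ⟨v, z, hy, hz, hym⟩ := pow_toWord y m hm
  have he : u ++ (List.replicate m w).flatten ++ invRev u
      = v ++ (List.replicate m z).flatten ++ invRev v := by
    rw [← hxm, ← hym, h]
  rcases le_total u.length v.length with hle | hle
  · obtain ⟨rfl, rfl⟩ := key hm hw hle he
    rw [← FreeGroup.toWord_inj, hx, hy]
  · obtain ⟨rfl, rfl⟩ := key hm hz hle he.symm
    rw [← FreeGroup.toWord_inj, hx, hy]

end FreeGroupRoots

theorem free_group_unique_roots {S : Type*} (x y : FreeGroup S) (n : ℤ) (hn : n ≠ 0)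
    (h : x ^ n = y ^ n) : x = y := by
  classical
  set m := n.natAbs with hm
  have hm0 : m ≠ 0 := fun h0 => hn (Int.natAbs_eq_zero.mp h0)
  rcases Int.natAbs_eq n with hne | hne
  · apply FreeGroupRoots.main_nat x y m hm0
    rw [← zpow_natCast, ← zpow_natCast, ← hne, h]
  · apply FreeGroupRoots.main_nat x y m hm0
    have : (x ^ (m : ℕ))⁻¹ = (y ^ (m : ℕ))⁻¹ := by
      rw [← zpow_natCast, ← zpow_natCast, ← zpow_neg, ← zpow_neg, ← hne, h]
    exact inv_injective this
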